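/- Suppose a family G_k(a,b,q) of formal power series (indexed by colored integers k) satisfies the eight q-difference equations (eq1)–(eq8) of Lemma 3.2 for all k ≥ 1, together with the initial conditions G_{1_{ab}} = 1, G_{1_a} = 1 + aq, G_{1_{b²}} = 1 + aq, G_{1_b} = 1 + aq + bq, G_{2_{ab}} = 1 + aq + bq + abq², G_{2_a} = 1 + aq + bq + abq² + aq², G_{3_{a²}} = 1 + aq + bq + abq² + aq² + a²q³, G_{2_b} = 1 + aq + bq + abq² + aq² + a²q³ + bq² + abq³. Then for all k ≥ 1: G_{(2k+1)_{ab}}(a,b,q) = (1+aq)·G_{(2k)_a}(b, aq, q), G_{(2k+1)_{b²}}(a,b,q) = (1+aq)·G_{(2k)_b}(b, aq, q), G_{(2k+2)_{ab}}(a,b,q) = (1+aq)·G_{(2k+1)_a}(b, aq, q), and G_{(2k+1)_{a²}}(a,b,q) = (1+aq)·G_{(2k−1)_b}(b, aq, q). -/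

import Mathlib

/-- The five colours a, b, ab, a², b². -/
inductive Col where
  | a | b | ab | aa | bb
deriving DecidableEq, Inhabited

open MvPowerSeries

/-- The substitution F(a,b,q) ↦ F(b,aq,q) on formal power series in
a = X 0, b = X 1, q = X 2: coefficient of aᵁbⱽqᴺ in F(b,aq,q) is the
coefficient of aⱽbᵁq^{N-U} in F (and 0 if U > N). -/
noncomputable def swapSub (F : MvPowerSeries (Fin 3) ℚ) : MvPowerSeries (Fin 3) ℚ :=
  fun e => if e 0 ≤ e 2 then
    MvPowerSeries.coeff
      (Finsupp.single 0 (e 1) + Finsupp.single 1 (e 0) + Finsupp.single 2 (e 2 - e 0)) F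
  else 0


namespace SwapAux

set_option linter.unreachableTactic false
set_option linter.unusedTactic false

abbrev MPS := MvPowerSeries (Fin 3) ℚ

lemma tri_apply (x y z : ℕ) (i : Fin 3) :
    ((Finsupp.single 0 x + Finsupp.single 1 y + Finsupp.single 2 z : Fin 3 →₀ ℕ)) i =
      if i = 0 then x else if i = 1 then y else z := by
  fin_cases i <;> simp [Finsupp.single_apply]

lemma coeff_swapSub (F : MPS) (e : Fin 3 →₀ ℕ) :
    coeff e (swapSub F) = if e 0 ≤ e 2 then
      coeff (Finsupp.single 0 (e 1) + Finsupp.single 1 (e 0) + Finsupp.single 2 (e 2 - e 0)) F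
    else 0 := rfl

lemma swapSub_add (F G : MPS) : swapSub (F + G) = swapSub F + swapSub G := by
  ext e
  rw [map_add, coeff_swapSub, coeff_swapSub, coeff_swapSub]
  split <;> simp

lemma swapSub_one : swapSub (1 : MPS) = 1 := by
  ext e
  rw [coeff_swapSub, coeff_one, coeff_one]
  by_cases h : e 0 ≤ e 2
  · rw [if_pos h]
    by_cases h0 : e = 0
    · subst h0
      simp
    · rw [if_neg h0, if_neg]
      intro hc
      apply h0
      have h0' := congrArg (fun f => f 0) hc
      have h1' := congrArg (fun f => f 1) hc
      have h2' := congrArg (fun f => f 2) hc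
      simp [tri_apply] at h0' h1' h2'
      ext i
      fin_cases i <;> simp <;> omega
  · rw [if_neg h, eq_comm, if_neg]
    intro hc
    subst hc
    simp at h

lemma coeff_X_mul' (s : Fin 3) (F : MPS) (e : Fin 3 →₀ ℕ) :
    coeff e (X s * F) = if 1 ≤ e s then coeff (e - Finsupp.single s 1) F else 0 := by
  rw [X, coeff_monomial_mul]
  simp [Finsupp.single_le_iff]

lemma coeff_congr {i j : Fin 3 →₀ ℕ} (h : ∀ x : Fin 3, i x = j x) (F : MPS) :
    coeff i F = coeff j F := by
  have : i = j := Finsupp.ext h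
  rw [this]

lemma swapSub_X0_mul (F : MPS) : swapSub (X 0 * F) = X 1 * swapSub F := by
  ext e
  simp only [coeff_swapSub, coeff_X_mul', tri_apply, Finsupp.tsub_apply,
    Finsupp.single_apply]
  norm_num
  split_ifs <;>
    first
      | rfl
      | (exfalso; omega)
      | (apply coeff_congr
         intro x
         fin_cases x <;> simp [tri_apply, Finsupp.tsub_apply, Finsupp.single_apply] <;> omega)

lemma swapSub_X1_mul (F : MPS) : swapSub (X 1 * F) = X 0 * (X 2 * swapSub F) := by
  ext e
  simp only [coeff_swapSub, coeff_X_mul', tri_apply, Finsupp.tsub_apply,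
    Finsupp.single_apply]
  norm_num
  split_ifs <;>
    first
      | rfl
      | (exfalso; omega)
      | (apply coeff_congr
         intro x
         fin_cases x <;> simp [tri_apply, Finsupp.tsub_apply, Finsupp.single_apply] <;> omega)

lemma swapSub_X2_mul (F : MPS) : swapSub (X 2 * F) = X 2 * swapSub F := by
  ext e
  simp only [coeff_swapSub, coeff_X_mul', tri_apply, Finsupp.tsub_apply,
    Finsupp.single_apply]
  norm_num
  split_ifs <;>
    first
      | rfl
      | (exfalso; omega)
      | (apply coeff_congr
         intro x
         fin_cases x <;> simp [tri_apply, Finsupp.tsub_apply, Finsupp.single_apply] <;> omega)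

lemma swapSub_X2pow_mul (n : ℕ) (F : MPS) : swapSub (X 2 ^ n * F) = X 2 ^ n * swapSub F := by
  induction n with
  | zero => simp
  | succ n ih =>
    rw [show X 2 ^ (n+1) * F = X 2 * (X 2 ^ n * F) by ring, swapSub_X2_mul, ih]
    ring

lemma Sab (n : ℕ) (F : MPS) :
    swapSub (X 0 * X 1 * X 2 ^ n * F) = X 0 * X 1 * X 2 ^ (n+1) * swapSub F := by
  rw [show X 0 * X 1 * X 2 ^ n * F = X 0 * (X 1 * (X 2 ^ n * F)) by ring,
    swapSub_X0_mul, swapSub_X1_mul, swapSub_X2pow_mul]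
  ring

lemma Sa (n : ℕ) (F : MPS) :
    swapSub (X 0 * X 2 ^ n * F) = X 1 * X 2 ^ n * swapSub F := by
  rw [show X 0 * X 2 ^ n * F = X 0 * (X 2 ^ n * F) by ring,
    swapSub_X0_mul, swapSub_X2pow_mul]
  ring

lemma Sb (n : ℕ) (F : MPS) :
    swapSub (X 1 * X 2 ^ n * F) = X 0 * X 2 ^ (n+1) * swapSub F := by
  rw [show X 1 * X 2 ^ n * F = X 1 * (X 2 ^ n * F) by ring,
    swapSub_X1_mul, swapSub_X2pow_mul]
  ring

lemma Sbb (n : ℕ) (F : MPS) :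
    swapSub (X 1 ^ 2 * X 2 ^ n * F) = X 0 ^ 2 * X 2 ^ (n+2) * swapSub F := by
  rw [show X 1 ^ 2 * X 2 ^ n * F = X 1 * (X 1 * (X 2 ^ n * F)) by ring,
    swapSub_X1_mul, swapSub_X1_mul, swapSub_X2pow_mul]
  ring

lemma Sabb (n : ℕ) (F : MPS) :
    swapSub (X 0 * X 1 ^ 2 * X 2 ^ n * F) = X 0 ^ 2 * X 1 * X 2 ^ (n+2) * swapSub F := by
  rw [show X 0 * X 1 ^ 2 * X 2 ^ n * F = X 0 * (X 1 * (X 1 * (X 2 ^ n * F))) by ring,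
    swapSub_X0_mul, swapSub_X1_mul, swapSub_X1_mul, swapSub_X2pow_mul]
  ring

lemma Saa (n : ℕ) (F : MPS) :
    swapSub (X 0 ^ 2 * X 2 ^ n * F) = X 1 ^ 2 * X 2 ^ n * swapSub F := by
  rw [show X 0 ^ 2 * X 2 ^ n * F = X 0 * (X 0 * (X 2 ^ n * F)) by ring,
    swapSub_X0_mul, swapSub_X0_mul, swapSub_X2pow_mul]
  ring

lemma Saab (n : ℕ) (F : MPS) :
    swapSub (X 0 ^ 2 * X 1 * X 2 ^ n * F) = X 0 * X 1 ^ 2 * X 2 ^ (n+1) * swapSub F := by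
  rw [show X 0 ^ 2 * X 1 * X 2 ^ n * F = X 0 * (X 0 * (X 1 * (X 2 ^ n * F))) by ring,
    swapSub_X0_mul, swapSub_X0_mul, swapSub_X1_mul, swapSub_X2pow_mul]
  ring

end SwapAux

set_option maxHeartbeats 4000000 in
/-- Proposition 2.1: any family of formal power series indexed by coloured integers
satisfying the q-difference equations (eq1)-(eq8) and the initial conditions
satisfies the four key functional equations. -/
theorem key_proposition (G : ℕ × Col → MvPowerSeries (Fin 3) ℚ)
    (eq1 : ∀ k : ℕ, 1 ≤ k → G (2*k+1, Col.ab) =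
      G (2*k, Col.b) + X 0 * X 1 * X 2 ^ (2*k+1) * G (2*k-1, Col.a))
    (eq2 : ∀ k : ℕ, 1 ≤ k → G (2*k+1, Col.a) =
      G (2*k+1, Col.ab) + X 0 * X 2 ^ (2*k+1) * G (2*k, Col.ab))
    (eq3 : ∀ k : ℕ, 1 ≤ k → G (2*k+1, Col.bb) =
      G (2*k+1, Col.a) + X 1 ^ 2 * X 2 ^ (2*k+1) * G (2*k-1, Col.a))
    (eq4 : ∀ k : ℕ, 1 ≤ k → G (2*k+1, Col.b) =
      G (2*k+1, Col.bb) + X 1 * X 2 ^ (2*k+1) * G (2*k, Col.a))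
    (eq5 : ∀ k : ℕ, 1 ≤ k → G (2*k+2, Col.ab) =
      G (2*k+1, Col.b) + X 0 * X 1 * X 2 ^ (2*k+2) * G (2*k, Col.a) +
      X 0 * X 1 ^ 2 * X 2 ^ (4*k+2) * G (2*k-1, Col.a))
    (eq6 : ∀ k : ℕ, 1 ≤ k → G (2*k+2, Col.a) =
      G (2*k+2, Col.ab) + X 0 * X 2 ^ (2*k+2) * G (2*k, Col.a) +
      X 0 * X 1 * X 2 ^ (4*k+2) * G (2*k-1, Col.a))
    (eq7 : ∀ k : ℕ, 1 ≤ k → G (2*k+3, Col.aa) =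
      G (2*k+2, Col.a) + X 0 ^ 2 * X 2 ^ (2*k+3) * G (2*k, Col.a) +
      X 0 ^ 2 * X 1 * X 2 ^ (4*k+3) * G (2*k-1, Col.a))
    (eq8 : ∀ k : ℕ, 1 ≤ k → G (2*k+2, Col.b) =
      G (2*k+3, Col.aa) + X 1 * X 2 ^ (2*k+2) * G (2*k+1, Col.a))
    (i1 : G (1, Col.ab) = 1)
    (i2 : G (1, Col.a) = 1 + X 0 * X 2)
    (i3 : G (1, Col.bb) = 1 + X 0 * X 2)
    (i4 : G (1, Col.b) = 1 + X 0 * X 2 + X 1 * X 2)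
    (i5 : G (2, Col.ab) = 1 + X 0 * X 2 + X 1 * X 2 + X 0 * X 1 * X 2 ^ 2)
    (i6 : G (2, Col.a) = 1 + X 0 * X 2 + X 1 * X 2 + X 0 * X 1 * X 2 ^ 2 + X 0 * X 2 ^ 2)
    (i7 : G (3, Col.aa) = 1 + X 0 * X 2 + X 1 * X 2 + X 0 * X 1 * X 2 ^ 2 + X 0 * X 2 ^ 2
      + X 0 ^ 2 * X 2 ^ 3)
    (i8 : G (2, Col.b) = 1 + X 0 * X 2 + X 1 * X 2 + X 0 * X 1 * X 2 ^ 2 + X 0 * X 2 ^ 2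
      + X 0 ^ 2 * X 2 ^ 3 + X 1 * X 2 ^ 2 + X 0 * X 1 * X 2 ^ 3) :
    ∀ k : ℕ, 1 ≤ k →
      G (2*k+1, Col.ab) = (1 + X 0 * X 2) * swapSub (G (2*k, Col.a)) ∧
      G (2*k+1, Col.bb) = (1 + X 0 * X 2) * swapSub (G (2*k, Col.b)) ∧
      G (2*k+2, Col.ab) = (1 + X 0 * X 2) * swapSub (G (2*k+1, Col.a)) ∧
      G (2*k+1, Col.aa) = (1 + X 0 * X 2) * swapSub (G (2*k-1, Col.b)) := by
  have keyL : ∀ m : ℕ, 1 ≤ m →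
      G (2*m, Col.a) + X 0 * X 2 * G (2*m, Col.a) + X 1 * X 2 ^ (2*m) * G (2*m-1, Col.a) =
      G (2*m, Col.b) + X 0 * X 2 * G (2*m, Col.ab) := by
    intro m hm
    obtain ⟨p, rfl⟩ : ∃ p, m = p + 1 := ⟨m - 1, by omega⟩
    cases p with
    | zero =>
      norm_num
      linear_combination (1 + X 0 * X 2) * i6 + X 1 * X 2 ^ 2 * i2 - i8 - X 0 * X 2 * i5
    | succ n =>
      have hE6 := eq6 (n+1) (by omega)
      have hE7 := eq7 (n+1) (by omega)
      have hE8 := eq8 (n+1) (by omega)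
      simp only [show 2*(n+1) = 2*n+2 from by omega, show 2*(n+2) = 2*n+4 from by omega,
      show 2*n+2+1 = 2*n+3 from by omega, show 2*n+2-1 = 2*n+1 from by omega,
      show 2*n+2+2 = 2*n+4 from by omega, show 2*n+2+3 = 2*n+5 from by omega,
      show 2*n+4+1 = 2*n+5 from by omega, show 2*n+4-1 = 2*n+3 from by omega,
      show 2*n+4+2 = 2*n+6 from by omega, show 2*n+4+3 = 2*n+7 from by omega,
      show 4*(n+1) = 4*n+4 from by omega, show 4*(n+2) = 4*n+8 from by omega,
      show 4*n+4+2 = 4*n+6 from by omega, show 4*n+4+3 = 4*n+7 from by omega,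
      show 4*n+4+4 = 4*n+8 from by omega, show 4*n+8+2 = 4*n+10 from by omega,
      show 4*n+8+3 = 4*n+11 from by omega, show 4*n+8+4 = 4*n+12 from by omega] at hE6 hE7 hE8 ⊢
      linear_combination - hE8 - hE7 + X 0 * X 2 * hE6
  have hS1 : ∀ m : ℕ, 1 ≤ m → swapSub (G (2*m+1, Col.ab)) =
      swapSub (G (2*m, Col.b)) + X 0 * X 1 * X 2 ^ (2*m+2) * swapSub (G (2*m-1, Col.a)) := by
    intro m hm
    have h := congrArg swapSub (eq1 m hm)
    simp only [SwapAux.swapSub_add, SwapAux.Sab] at h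
    linear_combination h
  have hS2 : ∀ m : ℕ, 1 ≤ m → swapSub (G (2*m+1, Col.a)) =
      swapSub (G (2*m+1, Col.ab)) + X 1 * X 2 ^ (2*m+1) * swapSub (G (2*m, Col.ab)) := by
    intro m hm
    have h := congrArg swapSub (eq2 m hm)
    simp only [SwapAux.swapSub_add, SwapAux.Sa] at h
    linear_combination h
  have hS3 : ∀ m : ℕ, 1 ≤ m → swapSub (G (2*m+1, Col.bb)) =
      swapSub (G (2*m+1, Col.a)) + X 0 ^ 2 * X 2 ^ (2*m+3) * swapSub (G (2*m-1, Col.a)) := by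
    intro m hm
    have h := congrArg swapSub (eq3 m hm)
    simp only [SwapAux.swapSub_add, SwapAux.Sbb] at h
    linear_combination h
  have hS4 : ∀ m : ℕ, 1 ≤ m → swapSub (G (2*m+1, Col.b)) =
      swapSub (G (2*m+1, Col.bb)) + X 0 * X 2 ^ (2*m+2) * swapSub (G (2*m, Col.a)) := by
    intro m hm
    have h := congrArg swapSub (eq4 m hm)
    simp only [SwapAux.swapSub_add, SwapAux.Sb] at h
    linear_combination h
  have hS5 : ∀ m : ℕ, 1 ≤ m → swapSub (G (2*m+2, Col.ab)) =
      swapSub (G (2*m+1, Col.b)) + X 0 * X 1 * X 2 ^ (2*m+3) * swapSub (G (2*m, Col.a)) +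
      X 0 ^ 2 * X 1 * X 2 ^ (4*m+4) * swapSub (G (2*m-1, Col.a)) := by
    intro m hm
    have h := congrArg swapSub (eq5 m hm)
    simp only [SwapAux.swapSub_add, SwapAux.Sab, SwapAux.Sabb] at h
    linear_combination h
  have hS6 : ∀ m : ℕ, 1 ≤ m → swapSub (G (2*m+2, Col.a)) =
      swapSub (G (2*m+2, Col.ab)) + X 1 * X 2 ^ (2*m+2) * swapSub (G (2*m, Col.a)) +
      X 0 * X 1 * X 2 ^ (4*m+3) * swapSub (G (2*m-1, Col.a)) := by
    intro m hm
    have h := congrArg swapSub (eq6 m hm)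
    simp only [SwapAux.swapSub_add, SwapAux.Sa, SwapAux.Sab] at h
    linear_combination h
  have hS7 : ∀ m : ℕ, 1 ≤ m → swapSub (G (2*m+3, Col.aa)) =
      swapSub (G (2*m+2, Col.a)) + X 1 ^ 2 * X 2 ^ (2*m+3) * swapSub (G (2*m, Col.a)) +
      X 0 * X 1 ^ 2 * X 2 ^ (4*m+4) * swapSub (G (2*m-1, Col.a)) := by
    intro m hm
    have h := congrArg swapSub (eq7 m hm)
    simp only [SwapAux.swapSub_add, SwapAux.Saa, SwapAux.Saab] at h
    linear_combination h
  have hS8 : ∀ m : ℕ, 1 ≤ m → swapSub (G (2*m+2, Col.b)) =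
      swapSub (G (2*m+3, Col.aa)) + X 0 * X 2 ^ (2*m+3) * swapSub (G (2*m+1, Col.a)) := by
    intro m hm
    have h := congrArg swapSub (eq8 m hm)
    simp only [SwapAux.swapSub_add, SwapAux.Sb] at h
    linear_combination h
  have R : ∀ k : ℕ,
      G (2*k+2, Col.ab) = (1 + X 0 * X 2) * swapSub (G (2*k+1, Col.a)) ∧
      G (2*k+4, Col.ab) = (1 + X 0 * X 2) * swapSub (G (2*k+3, Col.a)) ∧
      G (2*k+3, Col.ab) = (1 + X 0 * X 2) * swapSub (G (2*k+2, Col.a)) ∧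
      G (2*k+3, Col.bb) = (1 + X 0 * X 2) * swapSub (G (2*k+2, Col.b)) ∧
      G (2*k+3, Col.aa) = (1 + X 0 * X 2) * swapSub (G (2*k+1, Col.b)) := by
    intro k
    induction k with
    | zero =>
      have hE1 := eq1 1 le_rfl
      have hE2 := eq2 1 le_rfl
      have hE3 := eq3 1 le_rfl
      have hE4 := eq4 1 le_rfl
      have hE5 := eq5 1 le_rfl
      have hSE1 := hS1 1 le_rfl
      have hSE2 := hS2 1 le_rfl
      norm_num at hE1 hE2 hE3 hE4 hE5 hSE1 hSE2 ⊢
      have hSv1a : swapSub (G (1, Col.a)) = 1 + X 1 * X 2 := by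
        rw [i2, show (1 + X 0 * X 2 : MvPowerSeries (Fin 3) ℚ) = 1 + X 0 * X 2 ^ 1 * 1 from by ring]
        simp only [SwapAux.swapSub_add, SwapAux.swapSub_one, SwapAux.Sa, SwapAux.Sb,
          SwapAux.Sab, SwapAux.Saa]
        ring
      have hSv1b : swapSub (G (1, Col.b)) = 1 + X 1 * X 2 + X 0 * X 2 ^ 2 := by
        rw [i4, show (1 + X 0 * X 2 + X 1 * X 2 : MvPowerSeries (Fin 3) ℚ) = 1 + X 0 * X 2 ^ 1 * 1 + X 1 * X 2 ^ 1 * 1 from by ring]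
        simp only [SwapAux.swapSub_add, SwapAux.swapSub_one, SwapAux.Sa, SwapAux.Sb,
          SwapAux.Sab, SwapAux.Saa]
        ring
      have hSv2ab : swapSub (G (2, Col.ab)) = 1 + X 1 * X 2 + X 0 * X 2 ^ 2 + X 0 * X 1 * X 2 ^ 3 := by
        rw [i5, show (1 + X 0 * X 2 + X 1 * X 2 + X 0 * X 1 * X 2 ^ 2 : MvPowerSeries (Fin 3) ℚ) = 1 + X 0 * X 2 ^ 1 * 1 + X 1 * X 2 ^ 1 * 1 + X 0 * X 1 * X 2 ^ 2 * 1 from by ring]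
        simp only [SwapAux.swapSub_add, SwapAux.swapSub_one, SwapAux.Sa, SwapAux.Sb,
          SwapAux.Sab, SwapAux.Saa]
        ring
      have hSv2a : swapSub (G (2, Col.a)) = 1 + X 1 * X 2 + X 0 * X 2 ^ 2 + X 0 * X 1 * X 2 ^ 3 + X 1 * X 2 ^ 2 := by
        rw [i6, show (1 + X 0 * X 2 + X 1 * X 2 + X 0 * X 1 * X 2 ^ 2 + X 0 * X 2 ^ 2 : MvPowerSeries (Fin 3) ℚ) = 1 + X 0 * X 2 ^ 1 * 1 + X 1 * X 2 ^ 1 * 1 + X 0 * X 1 * X 2 ^ 2 * 1 + X 0 * X 2 ^ 2 * 1 from by ring]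
        simp only [SwapAux.swapSub_add, SwapAux.swapSub_one, SwapAux.Sa, SwapAux.Sb,
          SwapAux.Sab, SwapAux.Saa]
        ring
      have hSv2b : swapSub (G (2, Col.b)) = 1 + X 1 * X 2 + X 0 * X 2 ^ 2 + X 0 * X 1 * X 2 ^ 3 + X 1 * X 2 ^ 2 + X 1 ^ 2 * X 2 ^ 3 + X 0 * X 2 ^ 3 + X 0 * X 1 * X 2 ^ 4 := by
        rw [i8, show (1 + X 0 * X 2 + X 1 * X 2 + X 0 * X 1 * X 2 ^ 2 + X 0 * X 2 ^ 2 + X 0 ^ 2 * X 2 ^ 3 + X 1 * X 2 ^ 2 + X 0 * X 1 * X 2 ^ 3 : MvPowerSeries (Fin 3) ℚ) = 1 + X 0 * X 2 ^ 1 * 1 + X 1 * X 2 ^ 1 * 1 + X 0 * X 1 * X 2 ^ 2 * 1 + X 0 * X 2 ^ 2 * 1 + X 0 ^ 2 * X 2 ^ 3 * 1 + X 1 * X 2 ^ 2 * 1 + X 0 * X 1 * X 2 ^ 3 * 1 from by ring]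
        simp only [SwapAux.swapSub_add, SwapAux.swapSub_one, SwapAux.Sa, SwapAux.Sb,
          SwapAux.Sab, SwapAux.Saa]
        ring
      refine ⟨?_, ?_, ?_, ?_, ?_⟩
      · linear_combination i5 + ((-1 : MvPowerSeries (Fin 3) ℚ) + (-1 : MvPowerSeries (Fin 3) ℚ) * X 0 * X 2) * hSv1a
      · linear_combination hE5 + ((-1 : MvPowerSeries (Fin 3) ℚ) + (-1 : MvPowerSeries (Fin 3) ℚ) * X 0 * X 2) * hSE2 + hE4 + (X 1 * X 2 ^ 3 + X 0 * X 1 * X 2 ^ 4) * i6 + (X 1 ^ 2 * X 2 ^ 3 + X 0 * X 1 * X 2 ^ 3 + X 0 * X 1 ^ 2 * X 2 ^ 6) * i2 + ((-1 : MvPowerSeries (Fin 3) ℚ) + (-1 : MvPowerSeries (Fin 3) ℚ) * X 0 * X 2) * hSE1 + ((-1 : MvPowerSeries (Fin 3) ℚ) * X 1 * X 2 ^ 3 + (-1 : MvPowerSeries (Fin 3) ℚ) * X 0 * X 1 * X 2 ^ 4) * hSv2ab + hE3 + ((-1 : MvPowerSeries (Fin 3) ℚ) + (-1 : MvPowerSeries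 (Fin 3) ℚ) * X 0 * X 2) * hSv2b + ((-1 : MvPowerSeries (Fin 3) ℚ) * X 0 * X 1 * X 2 ^ 4 + (-1 : MvPowerSeries (Fin 3) ℚ) * X 0 ^ 2 * X 1 * X 2 ^ 5) * hSv1a + hE2 + hE1 + (X 0 * X 2 ^ 3) * i5 + i8
      · linear_combination hE1 + ((-1 : MvPowerSeries (Fin 3) ℚ) + (-1 : MvPowerSeries (Fin 3) ℚ) * X 0 * X 2) * hSv2a + i8 + (X 0 * X 1 * X 2 ^ 3) * i2
      · linear_combination hE3 + ((-1 : MvPowerSeries (Fin 3) ℚ) + (-1 : MvPowerSeries (Fin 3) ℚ) * X 0 * X 2) * hSv2b + hE2 + (X 1 ^ 2 * X 2 ^ 3 + X 0 * X 1 * X 2 ^ 3) * i2 + hE1 + (X 0 * X 2 ^ 3) * i5 + i8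
      · linear_combination i7 + ((-1 : MvPowerSeries (Fin 3) ℚ) + (-1 : MvPowerSeries (Fin 3) ℚ) * X 0 * X 2) * hSv1b
    | succ n ih =>
      obtain ⟨hCm1, hC, hA, hB, hD⟩ := ih
      have hm : 1 ≤ n + 1 := by omega
      have hE1 := eq1 (n+1) hm
      have hE2 := eq2 (n+1) hm
      have hE6 := eq6 (n+1) hm
      have hE7 := eq7 (n+1) hm
      have hE8 := eq8 (n+1) hm
      have hF1 := eq1 (n+2) (by omega)
      have hF2 := eq2 (n+2) (by omega)
      have hF3 := eq3 (n+2) (by omega)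
      have hF4 := eq4 (n+2) (by omega)
      have hF5 := eq5 (n+2) (by omega)
      have hSE3 := hS3 (n+1) hm
      have hSE4 := hS4 (n+1) hm
      have hSE5 := hS5 (n+1) hm
      have hSE6 := hS6 (n+1) hm
      have hSE7 := hS7 (n+1) hm
      have hSE8 := hS8 (n+1) hm
      have hSF1 := hS1 (n+2) (by omega)
      have hSF2 := hS2 (n+2) (by omega)
      have hL := keyL (n+1) hm
      simp only [show 2*(n+1) = 2*n+2 from by omega, show 2*(n+2) = 2*n+4 from by omega,
      show 2*n+2+1 = 2*n+3 from by omega, show 2*n+2-1 = 2*n+1 from by omega,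
      show 2*n+2+2 = 2*n+4 from by omega, show 2*n+2+3 = 2*n+5 from by omega,
      show 2*n+4+1 = 2*n+5 from by omega, show 2*n+4-1 = 2*n+3 from by omega,
      show 2*n+4+2 = 2*n+6 from by omega, show 2*n+4+3 = 2*n+7 from by omega,
      show 4*(n+1) = 4*n+4 from by omega, show 4*(n+2) = 4*n+8 from by omega,
      show 4*n+4+2 = 4*n+6 from by omega, show 4*n+4+3 = 4*n+7 from by omega,
      show 4*n+4+4 = 4*n+8 from by omega, show 4*n+8+2 = 4*n+10 from by omega,
      show 4*n+8+3 = 4*n+11 from by omega, show 4*n+8+4 = 4*n+12 from by omega] at hE1 hE2 hE6 hE7 hE8 hF1 hF2 hF3 hF4 hF5 hSE3 hSE4 hSE5 hSE6 hSE7 hSE8 hSF1 hSF2 hL ⊢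
      refine ⟨hC, ?_, ?_, ?_, ?_⟩
      · linear_combination ((-1 : MvPowerSeries (Fin 3) ℚ) * X 0 * X 2 ^ (2 * n + 4) + (-1 : MvPowerSeries (Fin 3) ℚ) * X 0 * X 1 * X 2 ^ (4 * n + 9)) * hE1 +
          (X 1 * X 2 ^ (2 * n + 4) + X 1 ^ 2 * X 2 ^ (2 * n + 5) + X 0 * X 1 * X 2 ^ (2 * n + 5) + X 0 * X 1 ^ 2 * X 2 ^ (4 * n + 10)) * hE2 +
          ((1 : MvPowerSeries (Fin 3) ℚ) + X 1 * X 2 ^ (2 * n + 5) + X 0 * X 1 * X 2 ^ (2 * n + 6)) * hE6 +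
          hE7 +
          hE8 +
          hF1 +
          hF2 +
          hF3 +
          hF4 +
          hF5 +
          (X 0 * X 2 ^ (2 * n + 4) + X 0 * X 1 * X 2 ^ (4 * n + 9)) * hL +
          ((-1 : MvPowerSeries (Fin 3) ℚ) + (-1 : MvPowerSeries (Fin 3) ℚ) * X 1 * X 2 ^ (2 * n + 5) + (-1 : MvPowerSeries (Fin 3) ℚ) * X 0 * X 2 + (-1 : MvPowerSeries (Fin 3) ℚ) * X 0 * X 1 * X 2 ^ (2 * n + 6)) * hSE3 +
          ((-1 : MvPowerSeries (Fin 3) ℚ) + (-1 : MvPowerSeries (Fin 3) ℚ) * X 1 * X 2 ^ (2 * n + 5) + (-1 : MvPowerSeries (Fin 3) ℚ) * X 0 * X 2 + (-1 : MvPowerSeries (Fin 3) ℚ) * X 0 * X 1 * X 2 ^ (2 * n + 6)) * hSE4 +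
          ((-1 : MvPowerSeries (Fin 3) ℚ) + (-1 : MvPowerSeries (Fin 3) ℚ) * X 1 * X 2 ^ (2 * n + 5) + (-1 : MvPowerSeries (Fin 3) ℚ) * X 0 * X 2 + (-1 : MvPowerSeries (Fin 3) ℚ) * X 0 * X 1 * X 2 ^ (2 * n + 6)) * hSE5 +
          ((-1 : MvPowerSeries (Fin 3) ℚ) + (-1 : MvPowerSeries (Fin 3) ℚ) * X 0 * X 2) * hSE6 +
          ((-1 : MvPowerSeries (Fin 3) ℚ) + (-1 : MvPowerSeries (Fin 3) ℚ) * X 0 * X 2) * hSE7 +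
          ((-1 : MvPowerSeries (Fin 3) ℚ) + (-1 : MvPowerSeries (Fin 3) ℚ) * X 0 * X 2) * hSE8 +
          ((-1 : MvPowerSeries (Fin 3) ℚ) + (-1 : MvPowerSeries (Fin 3) ℚ) * X 0 * X 2) * hSF1 +
          ((-1 : MvPowerSeries (Fin 3) ℚ) + (-1 : MvPowerSeries (Fin 3) ℚ) * X 0 * X 2) * hSF2 +
          (X 1 * X 2 ^ (2 * n + 4) + X 1 ^ 2 * X 2 ^ (2 * n + 5) + X 0 * X 2 ^ (2 * n + 4) + X 0 * X 1 * X 2 ^ (2 * n + 5) + X 0 * X 1 * X 2 ^ (4 * n + 9) + X 0 * X 1 ^ 2 * X 2 ^ (4 * n + 10)) * hA +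
          ((1 : MvPowerSeries (Fin 3) ℚ) + X 1 * X 2 ^ (2 * n + 5) + X 0 * X 2 ^ (2 * n + 5) + X 0 * X 1 * X 2 ^ (2 * n + 6)) * hC +
          (X 0 * X 1 * X 2 ^ (4 * n + 7) + X 0 * X 1 ^ 2 * X 2 ^ (4 * n + 8) + X 0 ^ 2 * X 2 ^ (2 * n + 5) + X 0 ^ 2 * X 1 * X 2 ^ (4 * n + 8) + X 0 ^ 2 * X 1 * X 2 ^ (4 * n + 10) + X 0 ^ 2 * X 1 ^ 2 * X 2 ^ (6 * n + 13)) * hCm1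
      · linear_combination ((-1 : MvPowerSeries (Fin 3) ℚ) * X 0 * X 2 ^ (2 * n + 4)) * hE1 +
          (X 1 * X 2 ^ (2 * n + 4) + X 0 * X 1 * X 2 ^ (2 * n + 5)) * hE2 +
          hE6 +
          hE7 +
          hE8 +
          hF1 +
          (X 0 * X 2 ^ (2 * n + 4)) * hL +
          ((-1 : MvPowerSeries (Fin 3) ℚ) + (-1 : MvPowerSeries (Fin 3) ℚ) * X 0 * X 2) * hSE3 +
          ((-1 : MvPowerSeries (Fin 3) ℚ) + (-1 : MvPowerSeries (Fin 3) ℚ) * X 0 * X 2) * hSE4 +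
          ((-1 : MvPowerSeries (Fin 3) ℚ) + (-1 : MvPowerSeries (Fin 3) ℚ) * X 0 * X 2) * hSE5 +
          ((-1 : MvPowerSeries (Fin 3) ℚ) + (-1 : MvPowerSeries (Fin 3) ℚ) * X 0 * X 2) * hSE6 +
          (X 1 * X 2 ^ (2 * n + 4) + X 0 * X 2 ^ (2 * n + 4) + X 0 * X 1 * X 2 ^ (2 * n + 5)) * hA +
          hC +
          (X 0 * X 1 * X 2 ^ (4 * n + 7) + X 0 ^ 2 * X 2 ^ (2 * n + 5) + X 0 ^ 2 * X 1 * X 2 ^ (4 * n + 8)) * hCm1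
      · linear_combination ((-1 : MvPowerSeries (Fin 3) ℚ) * X 0 * X 2 ^ (2 * n + 4)) * hE1 +
          (X 1 * X 2 ^ (2 * n + 4) + X 1 ^ 2 * X 2 ^ (2 * n + 5) + X 0 * X 1 * X 2 ^ (2 * n + 5)) * hE2 +
          hE6 +
          hE7 +
          hE8 +
          hF1 +
          hF2 +
          hF3 +
          (X 0 * X 2 ^ (2 * n + 4)) * hL +
          ((-1 : MvPowerSeries (Fin 3) ℚ) + (-1 : MvPowerSeries (Fin 3) ℚ) * X 0 * X 2) * hSE3 +
          ((-1 : MvPowerSeries (Fin 3) ℚ) + (-1 : MvPowerSeries (Fin 3) ℚ) * X 0 * X 2) * hSE4 +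
          ((-1 : MvPowerSeries (Fin 3) ℚ) + (-1 : MvPowerSeries (Fin 3) ℚ) * X 0 * X 2) * hSE5 +
          ((-1 : MvPowerSeries (Fin 3) ℚ) + (-1 : MvPowerSeries (Fin 3) ℚ) * X 0 * X 2) * hSE6 +
          ((-1 : MvPowerSeries (Fin 3) ℚ) + (-1 : MvPowerSeries (Fin 3) ℚ) * X 0 * X 2) * hSE7 +
          ((-1 : MvPowerSeries (Fin 3) ℚ) + (-1 : MvPowerSeries (Fin 3) ℚ) * X 0 * X 2) * hSE8 +
          (X 1 * X 2 ^ (2 * n + 4) + X 1 ^ 2 * X 2 ^ (2 * n + 5) + X 0 * X 2 ^ (2 * n + 4) + X 0 * X 1 * X 2 ^ (2 * n + 5)) * hA +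
          ((1 : MvPowerSeries (Fin 3) ℚ) + X 0 * X 2 ^ (2 * n + 5)) * hC +
          (X 0 * X 1 * X 2 ^ (4 * n + 7) + X 0 * X 1 ^ 2 * X 2 ^ (4 * n + 8) + X 0 ^ 2 * X 2 ^ (2 * n + 5) + X 0 ^ 2 * X 1 * X 2 ^ (4 * n + 8)) * hCm1
      · linear_combination ((-1 : MvPowerSeries (Fin 3) ℚ) * X 0 * X 2 ^ (2 * n + 4)) * hE1 +
          hE6 +
          hE7 +
          (X 0 * X 2 ^ (2 * n + 4)) * hL +
          ((-1 : MvPowerSeries (Fin 3) ℚ) + (-1 : MvPowerSeries (Fin 3) ℚ) * X 0 * X 2) * hSE3 +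
          ((-1 : MvPowerSeries (Fin 3) ℚ) + (-1 : MvPowerSeries (Fin 3) ℚ) * X 0 * X 2) * hSE4 +
          (X 0 * X 2 ^ (2 * n + 4)) * hA +
          hC +
          (X 0 ^ 2 * X 2 ^ (2 * n + 5)) * hCm1
  intro k hk
  obtain ⟨n, rfl⟩ : ∃ n, k = n + 1 := ⟨k - 1, by omega⟩
  obtain ⟨c1, c2, c3, c4, c5⟩ := R n
  simp only [show 2*(n+1) = 2*n+2 from by omega, show 2*(n+2) = 2*n+4 from by omega,
      show 2*n+2+1 = 2*n+3 from by omega, show 2*n+2-1 = 2*n+1 from by omega,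
      show 2*n+2+2 = 2*n+4 from by omega, show 2*n+2+3 = 2*n+5 from by omega,
      show 2*n+4+1 = 2*n+5 from by omega, show 2*n+4-1 = 2*n+3 from by omega,
      show 2*n+4+2 = 2*n+6 from by omega, show 2*n+4+3 = 2*n+7 from by omega,
      show 4*(n+1) = 4*n+4 from by omega, show 4*(n+2) = 4*n+8 from by omega,
      show 4*n+4+2 = 4*n+6 from by omega, show 4*n+4+3 = 4*n+7 from by omega,
      show 4*n+4+4 = 4*n+8 from by omega, show 4*n+8+2 = 4*n+10 from by omega,
      show 4*n+8+3 = 4*n+11 from by omega, show 4*n+8+4 = 4*n+12 from by omega]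
  exact ⟨c3, c4, c2, c5⟩
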